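/- Let X ∈ ℝ^{N×d} satisfy XXᵀ = I_N and let t > 0. Then the union over W₁ ∈ ℝ^{d×m} with ‖W₁‖_F ≤ t of the sets A(W₁) = { ((XW₁)₊ w₂)₊ : ‖w₂‖₂ ≤ 1 } equals { (z)₊ : z ∈ ℝ^N, ‖z‖₂ ≤ t }, where (·)₊ denotes entrywise ReLU. -/

import Mathlib

open Matrix

/-- Squared Frobenius norm. -/
noncomputable def frobSq {a b : ℕ} (M : Matrix (Fin a) (Fin b) ℝ) : ℝ := ∑ i, ∑ j, (M i j) ^ 2

/-- Euclidean norm of a vector. -/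
noncomputable def vecNorm {n : ℕ} (v : Fin n → ℝ) : ℝ := Real.sqrt (∑ i, (v i) ^ 2)

/-- Entrywise ReLU of a vector. -/
def reluV {n : ℕ} (v : Fin n → ℝ) : Fin n → ℝ := fun i => max (v i) 0

/-- Entrywise ReLU of a matrix. -/
def reluM {a b : ℕ} (M : Matrix (Fin a) (Fin b) ℝ) : Matrix (Fin a) (Fin b) ℝ :=
  fun i j => max (M i j) 0

/-- Contraction: for `X Xᵀ = 1`, `‖X w‖² ≤ ‖w‖²`. -/
lemma mulVec_sq_sum_le {N d : ℕ} (X : Matrix (Fin N) (Fin d) ℝ) (hX : X * Xᵀ = 1)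
    (w : Fin d → ℝ) : ∑ i, (X.mulVec w i) ^ 2 ≤ ∑ j, (w j) ^ 2 := by
  set y := X.mulVec w with hy
  set u := Xᵀ.mulVec y with hu
  have h1 : y ⬝ᵥ y = u ⬝ᵥ w := by
    rw [hy, hu, Matrix.mulVec_transpose, Matrix.dotProduct_mulVec]
  have h2 : u ⬝ᵥ u = y ⬝ᵥ y := by
    calc u ⬝ᵥ u = u ⬝ᵥ Xᵀ.mulVec y := by rw [hu]
      _ = (u ᵥ* Xᵀ) ⬝ᵥ y := Matrix.dotProduct_mulVec _ _ _
      _ = (X.mulVec u) ⬝ᵥ y := by rw [Matrix.vecMul_transpose]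
      _ = ((X * Xᵀ).mulVec y) ⬝ᵥ y := by rw [hu, Matrix.mulVec_mulVec]
      _ = y ⬝ᵥ y := by rw [hX, Matrix.one_mulVec]
  have cs : (u ⬝ᵥ w) ^ 2 ≤ (∑ j, (u j) ^ 2) * ∑ j, (w j) ^ 2 := by
    simpa [dotProduct] using Finset.sum_mul_sq_le_sq_mul_sq Finset.univ u w
  have huu : u ⬝ᵥ u = ∑ j, (u j) ^ 2 := by simp [dotProduct, sq]
  have hyy : y ⬝ᵥ y = ∑ i, (y i) ^ 2 := by simp [dotProduct, sq]
  have hww : w ⬝ᵥ w = ∑ j, (w j) ^ 2 := by simp [dotProduct, sq]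
  have hy0 : 0 ≤ ∑ i, (y i) ^ 2 := Finset.sum_nonneg fun _ _ => sq_nonneg _
  have hw0 : 0 ≤ ∑ j, (w j) ^ 2 := Finset.sum_nonneg fun _ _ => sq_nonneg _
  nlinarith [cs, h1, h2, huu, hyy, hy0, hw0]

/-- `‖M w‖² ≤ ‖M‖_F² ‖w‖²`. -/
lemma mulVec_sq_le_frobSq {a b : ℕ} (M : Matrix (Fin a) (Fin b) ℝ) (w : Fin b → ℝ) :
    ∑ i, (M.mulVec w i) ^ 2 ≤ frobSq M * ∑ j, (w j) ^ 2 := by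
  rw [frobSq, Finset.sum_mul]
  refine Finset.sum_le_sum fun i _ => ?_
  simpa [Matrix.mulVec, dotProduct] using
    Finset.sum_mul_sq_le_sq_mul_sq Finset.univ (M i) w

theorem relu_reachable_set_whitened
    (N d m : ℕ) (hm : 1 ≤ m) (t : ℝ) (ht : 0 < t)
    (X : Matrix (Fin N) (Fin d) ℝ) (hX : X * Xᵀ = 1) :
    {v : Fin N → ℝ | ∃ W₁ : Matrix (Fin d) (Fin m) ℝ,
        Real.sqrt (frobSq W₁) ≤ t ∧
        ∃ w₂ : Fin m → ℝ, vecNorm w₂ ≤ 1 ∧ v = reluV ((reluM (X * W₁)).mulVec w₂)} =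
    {v : Fin N → ℝ | ∃ z : Fin N → ℝ, vecNorm z ≤ t ∧ v = reluV z} := by
  ext v
  simp only [Set.mem_setOf_eq]
  constructor
  · rintro ⟨W₁, hW₁, w₂, hw₂, rfl⟩
    refine ⟨(reluM (X * W₁)).mulVec w₂, ?_, rfl⟩
    -- norm bound
    have hfW : frobSq W₁ ≤ t ^ 2 := by
      have h0 : 0 ≤ frobSq W₁ :=
        Finset.sum_nonneg fun _ _ => Finset.sum_nonneg fun _ _ => sq_nonneg _
      have := Real.sqrt_le_sqrt (le_of_eq (Real.sq_sqrt h0).symm)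
      nlinarith [Real.sq_sqrt h0, hW₁, Real.sqrt_nonneg (frobSq W₁)]
    have hw2sq : ∑ j, (w₂ j) ^ 2 ≤ 1 := by
      have h0 : 0 ≤ ∑ j, (w₂ j) ^ 2 := Finset.sum_nonneg fun _ _ => sq_nonneg _
      have hw₂' : Real.sqrt (∑ j, (w₂ j) ^ 2) ≤ 1 := hw₂
      nlinarith [Real.sq_sqrt h0, hw₂', Real.sqrt_nonneg (∑ j, (w₂ j) ^ 2)]
    -- frobSq (reluM (X*W₁)) ≤ frobSq (X*W₁)
    have hrelu : frobSq (reluM (X * W₁)) ≤ frobSq (X * W₁) := by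
      refine Finset.sum_le_sum fun i _ => Finset.sum_le_sum fun j _ => ?_
      rcases le_or_gt ((X * W₁) i j) 0 with h | h
      · simp [reluM, max_eq_right h]
        positivity
      · simp [reluM, max_eq_left h.le]
    -- frobSq (X*W₁) ≤ frobSq W₁ columnwise
    have hXW : frobSq (X * W₁) ≤ frobSq W₁ := by
      rw [frobSq, frobSq, Finset.sum_comm, Finset.sum_comm (s := Finset.univ (α := Fin d))]
      refine Finset.sum_le_sum fun k _ => ?_
      have := mulVec_sq_sum_le X hX (fun j => W₁ j k)
      simpa [Matrix.mulVec, dotProduct, Matrix.mul_apply] using this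
    have key : ∑ i, ((reluM (X * W₁)).mulVec w₂ i) ^ 2 ≤ t ^ 2 := by
      calc ∑ i, ((reluM (X * W₁)).mulVec w₂ i) ^ 2
          ≤ frobSq (reluM (X * W₁)) * ∑ j, (w₂ j) ^ 2 := mulVec_sq_le_frobSq _ _
        _ ≤ frobSq (X * W₁) * 1 := by
            have h0 : 0 ≤ frobSq (reluM (X * W₁)) :=
              Finset.sum_nonneg fun _ _ => Finset.sum_nonneg fun _ _ => sq_nonneg _
            exact mul_le_mul hrelu hw2sq (Finset.sum_nonneg fun _ _ => sq_nonneg _)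
              (Finset.sum_nonneg fun _ _ => Finset.sum_nonneg fun _ _ => sq_nonneg _)
        _ ≤ frobSq W₁ := by rw [mul_one]; exact hXW
        _ ≤ t ^ 2 := hfW
    rw [vecNorm]
    calc Real.sqrt (∑ i, ((reluM (X * W₁)).mulVec w₂ i) ^ 2)
        ≤ Real.sqrt (t ^ 2) := Real.sqrt_le_sqrt key
      _ = t := Real.sqrt_sq ht.le
  · rintro ⟨z, hz, rfl⟩
    set e : Fin m := ⟨0, hm⟩ with he
    set W₁ : Matrix (Fin d) (Fin m) ℝ :=
      fun j k => (Xᵀ.mulVec z j) * (if k = e then 1 else 0) with hW₁def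
    set w₂ : Fin m → ℝ := fun k => if k = e then 1 else 0 with hw₂def
    have hXtz : ∑ j, (Xᵀ.mulVec z j) ^ 2 = ∑ i, (z i) ^ 2 := by
      have : (Xᵀ.mulVec z) ⬝ᵥ (Xᵀ.mulVec z) = z ⬝ᵥ z := by
        calc (Xᵀ.mulVec z) ⬝ᵥ (Xᵀ.mulVec z)
            = ((Xᵀ.mulVec z) ᵥ* Xᵀ) ⬝ᵥ z := Matrix.dotProduct_mulVec _ _ _
          _ = (X.mulVec (Xᵀ.mulVec z)) ⬝ᵥ z := by rw [Matrix.vecMul_transpose]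
          _ = ((X * Xᵀ).mulVec z) ⬝ᵥ z := by rw [Matrix.mulVec_mulVec]
          _ = z ⬝ᵥ z := by rw [hX, Matrix.one_mulVec]
      simpa [dotProduct, sq] using this
    refine ⟨W₁, ?_, w₂, ?_, ?_⟩
    · -- frobSq
      have : frobSq W₁ = ∑ i, (z i) ^ 2 := by
        rw [frobSq, ← hXtz]
        refine Finset.sum_congr rfl fun j _ => ?_
        rw [Finset.sum_eq_single e]
        · simp [hW₁def]
        · intro k _ hk; simp [hW₁def, hk]
        · simp
      rw [this]
      have hz0 : 0 ≤ ∑ i, (z i) ^ 2 := Finset.sum_nonneg fun _ _ => sq_nonneg _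
      calc Real.sqrt (∑ i, (z i) ^ 2) = vecNorm z := rfl
        _ ≤ t := hz
    · -- vecNorm w₂ = 1
      have : ∑ k, (w₂ k) ^ 2 = 1 := by
        rw [Finset.sum_eq_single e]
        · simp [hw₂def]
        · intro k _ hk; simp [hw₂def, hk]
        · simp
      rw [vecNorm, this, Real.sqrt_one]
    · -- value
      have hXW : ∀ i k, (X * W₁) i k = z i * (if k = e then 1 else 0) := by
        intro i k
        have : (X * W₁) i k = (X.mulVec (Xᵀ.mulVec z)) i * (if k = e then 1 else 0) := by
          rw [Matrix.mul_apply]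
          simp only [Matrix.mul_apply, hW₁def, Matrix.mulVec, dotProduct]
          rw [Finset.sum_mul]
          exact Finset.sum_congr rfl fun j _ => by ring
        rw [this, Matrix.mulVec_mulVec, hX, Matrix.one_mulVec]
      funext i
      have : (reluM (X * W₁)).mulVec w₂ i = max (z i) 0 := by
        rw [Matrix.mulVec, dotProduct, Finset.sum_eq_single e]
        · simp [reluM, hXW, hw₂def]
        · intro k _ hk; simp [reluM, hXW, hw₂def, hk]
        · simp
      rw [reluV, reluV]
      simp [this]
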